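/- Fix a base b > 1 and an integer t ≥ 1. Let C_{t+1} be the value of the Morris counter after t increment operations, let j₀ be the minimum positive integer such that b^{−j₀} ≤ 1/(e·t), and let k ≥ 1 be an integer. Then P( C_{t+1} ≥ j₀ + k ) ≤ k^{−k} · b^{−k(k−1)/2}. -/

import Mathlib

open MeasureTheory ProbabilityTheory

/-- Tail bound for the Morris counter: after `t ≥ 1` increments with base `b > 1`, if
`j₀` is the least positive integer with `b^{-j₀} ≤ 1/(e t)` and `k ≥ 1`, then
`P(C_{t+1} ≥ j₀ + k) ≤ k^{-k} · b^{-k(k-1)/2}`. -/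
theorem morris_counter_tail_bound
    {Ω : Type*} [MeasurableSpace Ω] (P : Measure Ω) [IsProbabilityMeasure P]
    (b : ℝ) (hb : 1 < b) (t : ℕ) (ht : 1 ≤ t)
    (V : ℕ → Ω → ℝ) (hVmeas : ∀ s, Measurable (V s))
    (hVindep : iIndepFun V P)
    (hVunif : ∀ s, P.map (V s) = volume.restrict (Set.Icc (0 : ℝ) 1))
    (C : ℕ → Ω → ℕ) (hCmeas : ∀ s, Measurable (C s))
    (hC1 : ∀ ω, C 1 ω = 1)
    (hCstep : ∀ s, 1 ≤ s → ∀ ω,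
      C (s + 1) ω = if V s ω < (b ^ C s ω)⁻¹ then C s ω + 1 else C s ω)
    (j₀ : ℕ)
    (hj₀ : IsLeast {j : ℕ | 1 ≤ j ∧ b ^ (-(j : ℝ)) ≤ 1 / (Real.exp 1 * t)} j₀)
    (k : ℕ) (hk : 1 ≤ k) :
    P {ω | j₀ + k ≤ C (t + 1) ω}
      ≤ ENNReal.ofReal ((k : ℝ) ^ (-(k : ℝ)) * b ^ (-((k : ℝ) * ((k : ℝ) - 1) / 2))) := by
  classical
  obtain ⟨⟨hj₀1, hj₀le⟩, -⟩ := hj₀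
  have hb0 : (0 : ℝ) < b := lt_trans one_pos hb
  -- monotonicity of the counter
  have hmono : ∀ ω (u v : ℕ), 1 ≤ u → u ≤ v → C u ω ≤ C v ω := by
    intro ω u v hu huv
    induction v, huv using Nat.le_induction with
    | base => exact le_refl _
    | succ v hv ih =>
      rw [hCstep v (le_trans hu hv) ω]
      split <;> omega
  -- crossing times
  have hcross : ∀ ω (j w : ℕ), 1 ≤ w → 1 ≤ j → j < C w ω →
      ∃ s, 1 ≤ s ∧ s < w ∧ C s ω = j ∧ V s ω < (b ^ j)⁻¹ := by
    intro ω j w hw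
    induction w, hw using Nat.le_induction with
    | base =>
      intro h1 h2
      rw [hC1] at h2; omega
    | succ w hw ih =>
      intro h1 h2
      by_cases hcase : j < C w ω
      · obtain ⟨s, hs1, hs2, hs3, hs4⟩ := ih h1 hcase
        exact ⟨s, hs1, by omega, hs3, hs4⟩
      · push_neg at hcase
        have hstep := hCstep w hw ω
        by_cases hV : V w ω < (b ^ C w ω)⁻¹
        · rw [if_pos hV] at hstep
          have hCw : C w ω = j := by omega
          exact ⟨w, hw, by omega, hCw, by rwa [hCw] at hV⟩
        · rw [if_neg hV] at hstep; omega
  -- thresholds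
  set c : ℕ → ℝ := fun i => (b ^ (j₀ + i))⁻¹ with hc
  have hc_pos : ∀ i, 0 < c i := fun i => inv_pos.2 (pow_pos hb0 _)
  have hc_le_one : ∀ i, c i ≤ 1 := by
    intro i
    rw [hc]
    exact inv_le_one_of_one_le₀ (one_le_pow₀ hb.le)
  -- the union of events
  set E : Finset ℕ → Set Ω := fun A =>
    if h : A.card = k then ⋂ i : Fin k, V (A.orderEmbOfFin h i) ⁻¹' Set.Iio (c i)
    else ∅ with hE
  set S : Finset (Finset ℕ) := Finset.powersetCard k (Finset.Icc 1 t) with hS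
  -- inclusion of the tail event in the union
  have hsub : {ω | j₀ + k ≤ C (t + 1) ω} ⊆ ⋃ A ∈ S, E A := by
    intro ω hω
    simp only [Set.mem_setOf_eq] at hω
    have hex : ∀ i : Fin k, ∃ s, 1 ≤ s ∧ s < t + 1 ∧ C s ω = j₀ + (i : ℕ) ∧
        V s ω < (b ^ (j₀ + (i : ℕ)))⁻¹ := by
      intro i
      refine hcross ω (j₀ + (i : ℕ)) (t + 1) (by omega) (by omega) ?_
      have := i.isLt
      omega
    choose σ hσ1 hσ2 hσ3 hσ4 using hex
    have hσmono : StrictMono σ := by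
      intro i i' hii
      by_contra h
      push_neg at h
      have hle := hmono ω (σ i') (σ i) (hσ1 i') h
      rw [hσ3 i, hσ3 i'] at hle
      have : (i : ℕ) < (i' : ℕ) := hii
      omega
    set A : Finset ℕ := Finset.image σ Finset.univ with hA
    have hAcard : A.card = k := by
      rw [hA, Finset.card_image_of_injective _ hσmono.injective, Finset.card_univ,
        Fintype.card_fin]
    have hAmem : A ∈ S := by
      rw [hS, Finset.mem_powersetCard]
      refine ⟨?_, hAcard⟩
      intro n hn
      rw [hA] at hn
      obtain ⟨i, -, rfl⟩ := Finset.mem_image.1 hn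
      rw [Finset.mem_Icc]
      exact ⟨hσ1 i, by have := hσ2 i; omega⟩
    refine Set.mem_biUnion hAmem ?_
    rw [hE]
    simp only [dif_pos hAcard]
    have hemb : σ = A.orderEmbOfFin hAcard :=
      Finset.orderEmbOfFin_unique hAcard
        (fun i => Finset.mem_image_of_mem σ (Finset.mem_univ i)) hσmono
    refine Set.mem_iInter.2 fun i => ?_
    rw [← congrFun hemb i]
    exact hσ4 i
  -- probability of a strip
  have hIio : ∀ (n : ℕ) (x : ℝ), 0 ≤ x → x ≤ 1 →
      P (V n ⁻¹' Set.Iio x) = ENNReal.ofReal x := by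
    intro n x h0 h1
    rw [← Measure.map_apply (hVmeas n) measurableSet_Iio, hVunif n,
      Measure.restrict_apply measurableSet_Iio]
    have hIcc : Set.Iio x ∩ Set.Icc 0 1 = Set.Ico 0 x := by
      ext y
      simp only [Set.mem_inter_iff, Set.mem_Iio, Set.mem_Icc, Set.mem_Ico]
      constructor
      · rintro ⟨hy, hy0, hy1⟩; exact ⟨hy0, hy⟩
      · rintro ⟨hy0, hy⟩; exact ⟨hy, hy0, by linarith⟩
    rw [hIcc, Real.volume_Ico, sub_zero]
  -- probability of each piece
  set N : ℕ := ∑ i ∈ Finset.range k, (j₀ + i) with hN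
  have hEA : ∀ A ∈ S, P (E A) = ENNReal.ofReal ((b ^ N)⁻¹) := by
    intro A hAmem
    rw [hS, Finset.mem_powersetCard] at hAmem
    obtain ⟨hAsub, hAcard⟩ := hAmem
    set σ := A.orderEmbOfFin hAcard with hσ
    -- auxiliary thresholds indexed by time
    set c' : ℕ → ℝ := fun n =>
      if hn : n ∈ A then c ((A.orderIsoOfFin hAcard).symm ⟨n, hn⟩) else 0 with hc'
    have hc'σ : ∀ i : Fin k, c' (σ i) = c i := by
      intro i
      have hmem : σ i ∈ A := Finset.orderEmbOfFin_mem A hAcard i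
      rw [hc']
      simp only [dif_pos hmem]
      congr 1
      have : (⟨σ i, hmem⟩ : {x // x ∈ A}) = A.orderIsoOfFin hAcard i := by
        ext
        exact (Finset.coe_orderIsoOfFin_apply A hAcard i).symm
      rw [this, OrderIso.symm_apply_apply]
    have hEeq : E A = ⋂ n ∈ A, V n ⁻¹' Set.Iio (c' n) := by
      rw [hE]
      simp only [dif_pos hAcard]
      ext ω
      simp only [Set.mem_iInter, Set.mem_preimage, Set.mem_Iio]
      constructor
      · intro h n hn
        have hσi : σ ((A.orderIsoOfFin hAcard).symm ⟨n, hn⟩) = n := by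
          rw [hσ, ← Finset.coe_orderIsoOfFin_apply, OrderIso.apply_symm_apply]
        rw [hc']
        simp only [dif_pos hn]
        have hgoal := h ((A.orderIsoOfFin hAcard).symm ⟨n, hn⟩)
        rwa [hσi] at hgoal
      · intro h i
        have hmem : σ i ∈ A := Finset.orderEmbOfFin_mem A hAcard i
        have := h (σ i) hmem
        rwa [hc'σ i] at this
    have hprod := hVindep.meas_biInter (S := A)
      (s := fun n => V n ⁻¹' Set.Iio (c' n))
      (fun n _ => ⟨Set.Iio (c' n), measurableSet_Iio, rfl⟩)
    rw [hEeq, hprod]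
    -- rewrite product over A as product over Fin k
    have hAimage : Finset.image σ Finset.univ = A := by
      apply Finset.coe_injective
      rw [Finset.coe_image, Finset.coe_univ, Set.image_univ]
      exact Finset.range_orderEmbOfFin A hAcard
    rw [← hAimage, Finset.prod_image (fun i _ j _ h => σ.injective h)]
    have hterm : ∀ i : Fin k, P (V (σ i) ⁻¹' Set.Iio (c' (σ i))) =
        ENNReal.ofReal (c i) := by
      intro i
      rw [hc'σ i]
      exact hIio (σ i) (c i) (hc_pos i).le (hc_le_one i)
    calc ∏ i : Fin k, P (V (σ i) ⁻¹' Set.Iio (c' (σ i)))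
        = ∏ i : Fin k, ENNReal.ofReal (c i) := by
          exact Finset.prod_congr rfl fun i _ => hterm i
      _ = ENNReal.ofReal (∏ i : Fin k, c i) := by
          rw [← ENNReal.ofReal_prod_of_nonneg]
          exact fun i _ => (hc_pos i).le
      _ = ENNReal.ofReal ((b ^ N)⁻¹) := by
          congr 1
          simp only [hc]
          rw [Finset.prod_inv_distrib, Finset.prod_pow_eq_pow_sum, hN,
            ← Fin.sum_univ_eq_sum_range (fun i => j₀ + i) k]
  -- union bound
  have hbound : P {ω | j₀ + k ≤ C (t + 1) ω}
      ≤ (t.choose k : ENNReal) * ENNReal.ofReal ((b ^ N)⁻¹) := by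
    calc P {ω | j₀ + k ≤ C (t + 1) ω} ≤ P (⋃ A ∈ S, E A) := measure_mono hsub
      _ ≤ ∑ A ∈ S, P (E A) := measure_biUnion_finset_le S E
      _ = ∑ _A ∈ S, ENNReal.ofReal ((b ^ N)⁻¹) := Finset.sum_congr rfl hEA
      _ = (S.card : ENNReal) * ENNReal.ofReal ((b ^ N)⁻¹) := by
          rw [Finset.sum_const, nsmul_eq_mul]
      _ = (t.choose k : ENNReal) * ENNReal.ofReal ((b ^ N)⁻¹) := by
          rw [hS, Finset.card_powersetCard, Nat.card_Icc]
          norm_num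
  refine le_trans hbound ?_
  rw [← ENNReal.ofReal_natCast, ← ENNReal.ofReal_mul (by positivity)]
  apply ENNReal.ofReal_le_ofReal
  -- now a real-number inequality
  set e : ℝ := Real.exp 1 with he
  have he0 : (0 : ℝ) < e := Real.exp_pos 1
  have ht0 : (0 : ℝ) < (t : ℝ) := by exact_mod_cast ht
  have hkf : (0 : ℝ) < (k.factorial : ℝ) := by exact_mod_cast k.factorial_pos
  have hkk : (0 : ℝ) < (k : ℝ) ^ k := pow_pos (by exact_mod_cast hk) k
  -- split N
  set M : ℕ := ∑ i ∈ Finset.range k, i with hM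
  have hNsplit : N = k * j₀ + M := by
    rw [hN, hM, Finset.sum_add_distrib, Finset.sum_const, Finset.card_range, smul_eq_mul]
  have hMcast : (M : ℝ) = (k : ℝ) * ((k : ℝ) - 1) / 2 := by
    have h2 : (M * 2 : ℕ) = k * (k - 1) := Finset.sum_range_id_mul_two k
    have : ((M * 2 : ℕ) : ℝ) = ((k * (k - 1) : ℕ) : ℝ) := by exact_mod_cast h2
    push_cast [Nat.cast_sub hk] at this
    linarith
  -- rewrite RHS with natural powers
  have hRHS : (k : ℝ) ^ (-(k : ℝ)) * b ^ (-((k : ℝ) * ((k : ℝ) - 1) / 2))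
      = ((k : ℝ) ^ k)⁻¹ * ((b : ℝ) ^ M)⁻¹ := by
    rw [← hMcast, Real.rpow_neg (by positivity), Real.rpow_neg hb0.le,
      Real.rpow_natCast, Real.rpow_natCast]
  rw [hRHS, hNsplit, pow_add, mul_inv]
  have hbM : (0 : ℝ) < ((b : ℝ) ^ M)⁻¹ := by positivity
  rw [← mul_assoc]
  apply mul_le_mul_of_nonneg_right _ hbM.le
  -- key inequality: choose t k * (b^(k j₀))⁻¹ ≤ (k^k)⁻¹
  have hinvj₀ : ((b : ℝ) ^ j₀)⁻¹ ≤ 1 / (e * t) := by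
    have : b ^ (-(j₀ : ℝ)) = ((b : ℝ) ^ j₀)⁻¹ := by
      rw [Real.rpow_neg hb0.le, Real.rpow_natCast]
    rw [← this]
    exact hj₀le
  have hchoose : (t.choose k : ℝ) ≤ (t : ℝ) ^ k / k.factorial :=
    Nat.choose_le_pow_div k t
  have hkke : (k : ℝ) ^ k ≤ (k.factorial : ℝ) * e ^ k := by
    have h1 : (k : ℝ) ^ k / k.factorial ≤ Real.exp k :=
      Real.pow_div_factorial_le_exp (x := (k : ℝ)) (Nat.cast_nonneg k) k
    have h2 : Real.exp (k : ℝ) = e ^ k := by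
      rw [he, ← Real.exp_nat_mul, mul_one]
    rw [h2] at h1
    rw [div_le_iff₀ hkf] at h1
    linarith [h1]
  calc (t.choose k : ℝ) * ((b : ℝ) ^ (k * j₀))⁻¹
      = (t.choose k : ℝ) * (((b : ℝ) ^ j₀)⁻¹) ^ k := by
        rw [pow_mul', inv_pow]
    _ ≤ ((t : ℝ) ^ k / k.factorial) * (1 / (e * t)) ^ k := by
        apply mul_le_mul hchoose
        · exact pow_le_pow_left₀ (by positivity) hinvj₀ k
        · positivity
        · positivity
    _ = 1 / ((k.factorial : ℝ) * e ^ k) := by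
        field_simp
        rw [← mul_pow, ← mul_pow,
          show (t : ℝ) * (1 / (e * t)) * e = 1 by field_simp, one_pow]
    _ ≤ ((k : ℝ) ^ k)⁻¹ := by
        rw [one_div]
        apply inv_anti₀ hkk hkke
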